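/- Let L > 0 and let q₁, q₂ : [0, L] → ℝ be continuous. Suppose v, e, w : [0, L] → ℝ³ are C¹ and satisfy vₛ = q₁ e + q₂ w, eₛ = −q₁ v, wₛ = −q₂ v on [0, L], with initial values (v, e, w)(0) = (e₁, −e₂, e₃). Then for every s ∈ [0, L] the triple {v(s), e(s), w(s)} is an orthonormal basis of ℝ³ and moreover v(s) × e(s) = −w(s) and v(s) × w(s) = e(s). -/

import Mathlib

open Real MeasureTheory Set

noncomputable section

/-- Euclidean dot product on ℝ³ (vectors as `Fin 3 → ℝ`). -/
def dot3 (a b : Fin 3 → ℝ) : ℝ := a 0 * b 0 + a 1 * b 1 + a 2 * b 2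

/-- Euclidean norm on ℝ³. -/
def norm3 (a : Fin 3 → ℝ) : ℝ := Real.sqrt (dot3 a a)

/-- Cross product on ℝ³. -/
def cross3 (a b : Fin 3 → ℝ) : Fin 3 → ℝ :=
  ![a 1 * b 2 - a 2 * b 1, a 2 * b 0 - a 0 * b 2, a 0 * b 1 - a 1 * b 0]

/-- Partial derivative in the first (space) variable. -/
def pS {E : Type*} [NormedAddCommGroup E] [NormedSpace ℝ E]
    (f : ℝ → ℝ → E) (s t : ℝ) : E := deriv (fun s' => f s' t) s

/-- Partial derivative in the second (time) variable. -/
def pT {E : Type*} [NormedAddCommGroup E] [NormedSpace ℝ E]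
    (f : ℝ → ℝ → E) (s t : ℝ) : E := deriv (fun t' => f s t') t

/-- The Sobolev `H^m` norm on `(0, L)` of an ℝ³-valued function. -/
def sobNorm3 (m : ℕ) (L : ℝ) (f : ℝ → Fin 3 → ℝ) : ℝ :=
  Real.sqrt (∑ k ∈ Finset.range (m + 1), ∫ s in (0:ℝ)..L, norm3 (iteratedDeriv k f s) ^ 2)

/-- The Sobolev `H^m` norm on `(0, L)` of a ℂ-valued function. -/
def sobNormC (m : ℕ) (L : ℝ) (f : ℝ → ℂ) : ℝ :=
  Real.sqrt (∑ k ∈ Finset.range (m + 1), ∫ s in (0:ℝ)..L, ‖iteratedDeriv k f s‖ ^ 2)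

/-- Sup (`L^∞`) norm on `[0, L]`. -/
def supIcc (f : ℝ → ℝ) (L : ℝ) : ℝ := ⨆ s : Set.Icc (0:ℝ) L, |f (s : ℝ)|

private def frY (v e w : ℝ → Fin 3 → ℝ) (s : ℝ) : Fin 15 → ℝ :=
  ![dot3 (v s) (v s) - 1,
    dot3 (e s) (e s) - 1,
    dot3 (w s) (w s) - 1,
    dot3 (v s) (e s),
    dot3 (v s) (w s),
    dot3 (e s) (w s),
    v s 1 * e s 2 - v s 2 * e s 1 + w s 0,
    v s 2 * e s 0 - v s 0 * e s 2 + w s 1,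
    v s 0 * e s 1 - v s 1 * e s 0 + w s 2,
    v s 1 * w s 2 - v s 2 * w s 1 - e s 0,
    v s 2 * w s 0 - v s 0 * w s 2 - e s 1,
    v s 0 * w s 1 - v s 1 * w s 0 - e s 2,
    e s 1 * w s 2 - e s 2 * w s 1 + v s 0,
    e s 2 * w s 0 - e s 0 * w s 2 + v s 1,
    e s 0 * w s 1 - e s 1 * w s 0 + v s 2]

private def frX (v e w : ℝ → Fin 3 → ℝ) (s : ℝ) : Fin 15 → ℝ :=
  ![2 * (dot3 (v s) (e s)),
    -(2 * (dot3 (v s) (e s))),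
    (0:ℝ),
    dot3 (e s) (e s) - dot3 (v s) (v s),
    dot3 (e s) (w s),
    -(dot3 (v s) (w s)),
    (0:ℝ),
    (0:ℝ),
    (0:ℝ),
    (e s 1 * w s 2 - e s 2 * w s 1 + v s 0),
    (e s 2 * w s 0 - e s 0 * w s 2 + v s 1),
    (e s 0 * w s 1 - e s 1 * w s 0 + v s 2),
    -(v s 1 * w s 2 - v s 2 * w s 1 - e s 0),
    -(v s 2 * w s 0 - v s 0 * w s 2 - e s 1),
    -(v s 0 * w s 1 - v s 1 * w s 0 - e s 2)]

private def frZ (v e w : ℝ → Fin 3 → ℝ) (s : ℝ) : Fin 15 → ℝ :=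
  ![2 * (dot3 (v s) (w s)),
    (0:ℝ),
    -(2 * (dot3 (v s) (w s))),
    dot3 (e s) (w s),
    dot3 (w s) (w s) - dot3 (v s) (v s),
    -(dot3 (v s) (e s)),
    -(e s 1 * w s 2 - e s 2 * w s 1 + v s 0),
    -(e s 2 * w s 0 - e s 0 * w s 2 + v s 1),
    -(e s 0 * w s 1 - e s 1 * w s 0 + v s 2),
    (0:ℝ),
    (0:ℝ),
    (0:ℝ),
    (v s 1 * e s 2 - v s 2 * e s 1 + w s 0),
    (v s 2 * e s 0 - v s 0 * e s 2 + w s 1),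
    (v s 0 * e s 1 - v s 1 * e s 0 + w s 2)]

private def frY' (q₁ q₂ : ℝ → ℝ) (v e w : ℝ → Fin 3 → ℝ) (s : ℝ) : Fin 15 → ℝ :=
  fun i => q₁ s * frX v e w s i + q₂ s * frZ v e w s i

private lemma abs_lin_bound {a b X Z C M : ℝ} (ha : |a| ≤ C) (hb : |b| ≤ C)
    (hX : |X| ≤ 2 * M) (hZ : |Z| ≤ 2 * M) : |a * X + b * Z| ≤ 4 * C * M := by
  have hC : 0 ≤ C := (abs_nonneg a).trans ha
  have h1 : |a * X| ≤ C * (2 * M) := by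
    rw [abs_mul]; exact mul_le_mul ha hX (abs_nonneg _) hC
  have h2 : |b * Z| ≤ C * (2 * M) := by
    rw [abs_mul]; exact mul_le_mul hb hZ (abs_nonneg _) hC
  calc |a * X + b * Z| ≤ |a * X| + |b * Z| := abs_add_le _ _
    _ ≤ 4 * C * M := by linarith

set_option maxHeartbeats 1600000 in
private lemma frY_hasDeriv {L : ℝ} {q₁ q₂ : ℝ → ℝ} {v e w : ℝ → Fin 3 → ℝ}
    (hv : ∀ s ∈ Set.Icc (0:ℝ) L,
      HasDerivWithinAt v (q₁ s • e s + q₂ s • w s) (Set.Icc 0 L) s)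
    (he : ∀ s ∈ Set.Icc (0:ℝ) L,
      HasDerivWithinAt e (-(q₁ s) • v s) (Set.Icc 0 L) s)
    (hw : ∀ s ∈ Set.Icc (0:ℝ) L,
      HasDerivWithinAt w (-(q₂ s) • v s) (Set.Icc 0 L) s)
    {x : ℝ} (hx : x ∈ Set.Icc (0:ℝ) L) :
    HasDerivWithinAt (frY v e w) (frY' q₁ q₂ v e w x) (Set.Icc 0 L) x := by
  have Hv : ∀ i, HasDerivWithinAt (fun t => v t i)
      (q₁ x * e x i + q₂ x * w x i) (Set.Icc (0:ℝ) L) x := by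
    intro i
    simpa using hasDerivWithinAt_pi.1 (hv x hx) i
  have He : ∀ i, HasDerivWithinAt (fun t => e t i)
      (-(q₁ x * v x i)) (Set.Icc (0:ℝ) L) x := by
    intro i
    simpa using hasDerivWithinAt_pi.1 (he x hx) i
  have Hw : ∀ i, HasDerivWithinAt (fun t => w t i)
      (-(q₂ x * v x i)) (Set.Icc (0:ℝ) L) x := by
    intro i
    simpa using hasDerivWithinAt_pi.1 (hw x hx) i
  rw [hasDerivWithinAt_pi]
  intro i
  fin_cases i
  · show HasDerivWithinAt (fun s => dot3 (v s) (v s) - 1)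
        (q₁ x * (2 * (dot3 (v x) (e x))) + q₂ x * (2 * (dot3 (v x) (w x)))) (Set.Icc (0:ℝ) L) x
    exact (((((Hv 0).mul (Hv 0)).add ((Hv 1).mul (Hv 1))).add ((Hv 2).mul (Hv 2))).sub_const 1).congr_deriv (by first | (simp only [dot3]; ring) | ring)
  · show HasDerivWithinAt (fun s => dot3 (e s) (e s) - 1)
        (q₁ x * (-(2 * (dot3 (v x) (e x)))) + q₂ x * ((0:ℝ))) (Set.Icc (0:ℝ) L) x
    exact (((((He 0).mul (He 0)).add ((He 1).mul (He 1))).add ((He 2).mul (He 2))).sub_const 1).congr_deriv (by first | (simp only [dot3]; ring) | ring)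
  · show HasDerivWithinAt (fun s => dot3 (w s) (w s) - 1)
        (q₁ x * ((0:ℝ)) + q₂ x * (-(2 * (dot3 (v x) (w x))))) (Set.Icc (0:ℝ) L) x
    exact (((((Hw 0).mul (Hw 0)).add ((Hw 1).mul (Hw 1))).add ((Hw 2).mul (Hw 2))).sub_const 1).congr_deriv (by first | (simp only [dot3]; ring) | ring)
  · show HasDerivWithinAt (fun s => dot3 (v s) (e s))
        (q₁ x * (dot3 (e x) (e x) - dot3 (v x) (v x)) + q₂ x * (dot3 (e x) (w x))) (Set.Icc (0:ℝ) L) x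
    exact ((((Hv 0).mul (He 0)).add ((Hv 1).mul (He 1))).add ((Hv 2).mul (He 2))).congr_deriv (by first | (simp only [dot3]; ring) | ring)
  · show HasDerivWithinAt (fun s => dot3 (v s) (w s))
        (q₁ x * (dot3 (e x) (w x)) + q₂ x * (dot3 (w x) (w x) - dot3 (v x) (v x))) (Set.Icc (0:ℝ) L) x
    exact ((((Hv 0).mul (Hw 0)).add ((Hv 1).mul (Hw 1))).add ((Hv 2).mul (Hw 2))).congr_deriv (by first | (simp only [dot3]; ring) | ring)
  · show HasDerivWithinAt (fun s => dot3 (e s) (w s))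
        (q₁ x * (-(dot3 (v x) (w x))) + q₂ x * (-(dot3 (v x) (e x)))) (Set.Icc (0:ℝ) L) x
    exact ((((He 0).mul (Hw 0)).add ((He 1).mul (Hw 1))).add ((He 2).mul (Hw 2))).congr_deriv (by first | (simp only [dot3]; ring) | ring)
  · show HasDerivWithinAt (fun s => v s 1 * e s 2 - v s 2 * e s 1 + w s 0)
        (q₁ x * ((0:ℝ)) + q₂ x * (-(e x 1 * w x 2 - e x 2 * w x 1 + v x 0))) (Set.Icc (0:ℝ) L) x
    exact ((((Hv 1).mul (He 2)).sub ((Hv 2).mul (He 1))).add (Hw 0)).congr_deriv (by first | (simp only [dot3]; ring) | ring)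
  · show HasDerivWithinAt (fun s => v s 2 * e s 0 - v s 0 * e s 2 + w s 1)
        (q₁ x * ((0:ℝ)) + q₂ x * (-(e x 2 * w x 0 - e x 0 * w x 2 + v x 1))) (Set.Icc (0:ℝ) L) x
    exact ((((Hv 2).mul (He 0)).sub ((Hv 0).mul (He 2))).add (Hw 1)).congr_deriv (by first | (simp only [dot3]; ring) | ring)
  · show HasDerivWithinAt (fun s => v s 0 * e s 1 - v s 1 * e s 0 + w s 2)
        (q₁ x * ((0:ℝ)) + q₂ x * (-(e x 0 * w x 1 - e x 1 * w x 0 + v x 2))) (Set.Icc (0:ℝ) L) x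
    exact ((((Hv 0).mul (He 1)).sub ((Hv 1).mul (He 0))).add (Hw 2)).congr_deriv (by first | (simp only [dot3]; ring) | ring)
  · show HasDerivWithinAt (fun s => v s 1 * w s 2 - v s 2 * w s 1 - e s 0)
        (q₁ x * ((e x 1 * w x 2 - e x 2 * w x 1 + v x 0)) + q₂ x * ((0:ℝ))) (Set.Icc (0:ℝ) L) x
    exact ((((Hv 1).mul (Hw 2)).sub ((Hv 2).mul (Hw 1))).sub (He 0)).congr_deriv (by first | (simp only [dot3]; ring) | ring)
  · show HasDerivWithinAt (fun s => v s 2 * w s 0 - v s 0 * w s 2 - e s 1)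
        (q₁ x * ((e x 2 * w x 0 - e x 0 * w x 2 + v x 1)) + q₂ x * ((0:ℝ))) (Set.Icc (0:ℝ) L) x
    exact ((((Hv 2).mul (Hw 0)).sub ((Hv 0).mul (Hw 2))).sub (He 1)).congr_deriv (by first | (simp only [dot3]; ring) | ring)
  · show HasDerivWithinAt (fun s => v s 0 * w s 1 - v s 1 * w s 0 - e s 2)
        (q₁ x * ((e x 0 * w x 1 - e x 1 * w x 0 + v x 2)) + q₂ x * ((0:ℝ))) (Set.Icc (0:ℝ) L) x
    exact ((((Hv 0).mul (Hw 1)).sub ((Hv 1).mul (Hw 0))).sub (He 2)).congr_deriv (by first | (simp only [dot3]; ring) | ring)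
  · show HasDerivWithinAt (fun s => e s 1 * w s 2 - e s 2 * w s 1 + v s 0)
        (q₁ x * (-(v x 1 * w x 2 - v x 2 * w x 1 - e x 0)) + q₂ x * ((v x 1 * e x 2 - v x 2 * e x 1 + w x 0))) (Set.Icc (0:ℝ) L) x
    exact ((((He 1).mul (Hw 2)).sub ((He 2).mul (Hw 1))).add (Hv 0)).congr_deriv (by first | (simp only [dot3]; ring) | ring)
  · show HasDerivWithinAt (fun s => e s 2 * w s 0 - e s 0 * w s 2 + v s 1)
        (q₁ x * (-(v x 2 * w x 0 - v x 0 * w x 2 - e x 1)) + q₂ x * ((v x 2 * e x 0 - v x 0 * e x 2 + w x 1))) (Set.Icc (0:ℝ) L) x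
    exact ((((He 2).mul (Hw 0)).sub ((He 0).mul (Hw 2))).add (Hv 1)).congr_deriv (by first | (simp only [dot3]; ring) | ring)
  · show HasDerivWithinAt (fun s => e s 0 * w s 1 - e s 1 * w s 0 + v s 2)
        (q₁ x * (-(v x 0 * w x 1 - v x 1 * w x 0 - e x 2)) + q₂ x * ((v x 0 * e x 1 - v x 1 * e x 0 + w x 2))) (Set.Icc (0:ℝ) L) x
    exact ((((He 0).mul (Hw 1)).sub ((He 1).mul (Hw 0))).add (Hv 2)).congr_deriv (by first | (simp only [dot3]; ring) | ring)

set_option maxHeartbeats 3200000 in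
theorem frame_system_orthonormal
    (L : ℝ) (hL : 0 < L)
    (q₁ q₂ : ℝ → ℝ) (v e w : ℝ → Fin 3 → ℝ)
    (hq₁ : ContinuousOn q₁ (Set.Icc 0 L)) (hq₂ : ContinuousOn q₂ (Set.Icc 0 L))
    (hv : ∀ s ∈ Set.Icc (0:ℝ) L,
      HasDerivWithinAt v (q₁ s • e s + q₂ s • w s) (Set.Icc 0 L) s)
    (he : ∀ s ∈ Set.Icc (0:ℝ) L,
      HasDerivWithinAt e (-(q₁ s) • v s) (Set.Icc 0 L) s)
    (hw : ∀ s ∈ Set.Icc (0:ℝ) L,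
      HasDerivWithinAt w (-(q₂ s) • v s) (Set.Icc 0 L) s)
    (hv0 : v 0 = ![1, 0, 0]) (he0 : e 0 = ![0, -1, 0]) (hw0 : w 0 = ![0, 0, 1]) :
    ∀ s ∈ Set.Icc (0:ℝ) L,
      (dot3 (v s) (v s) = 1 ∧ dot3 (e s) (e s) = 1 ∧ dot3 (w s) (w s) = 1 ∧
        dot3 (v s) (e s) = 0 ∧ dot3 (v s) (w s) = 0 ∧ dot3 (e s) (w s) = 0) ∧
      Submodule.span ℝ {v s, e s, w s} = ⊤ ∧
      cross3 (v s) (e s) = -(w s) ∧ cross3 (v s) (w s) = e s := by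
  -- bound the coefficients
  obtain ⟨C₁, hC₁⟩ := (isCompact_Icc : IsCompact (Set.Icc (0:ℝ) L)).exists_bound_of_continuousOn hq₁
  obtain ⟨C₂, hC₂⟩ := (isCompact_Icc : IsCompact (Set.Icc (0:ℝ) L)).exists_bound_of_continuousOn hq₂
  set C : ℝ := max (max C₁ C₂) 0 with hCdef
  have hC0 : (0:ℝ) ≤ C := le_max_right _ _
  have hq1C : ∀ s ∈ Set.Icc (0:ℝ) L, |q₁ s| ≤ C := fun s hs =>
    le_trans (hC₁ s hs) (le_trans (le_max_left _ _) (le_max_left _ _))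
  have hq2C : ∀ s ∈ Set.Icc (0:ℝ) L, |q₂ s| ≤ C := fun s hs =>
    le_trans (hC₂ s hs) (le_trans (le_max_right _ _) (le_max_left _ _))
  -- continuity of frY
  have hcont : ContinuousOn (frY v e w) (Set.Icc (0:ℝ) L) := fun x hx =>
    (frY_hasDeriv hv he hw hx).continuousWithinAt
  -- right derivative
  have hder : ∀ x ∈ Set.Ico (0:ℝ) L,
      HasDerivWithinAt (frY v e w) (frY' q₁ q₂ v e w x) (Set.Ici x) x := by
    intro x hx
    have hmem : Set.Icc (0:ℝ) L ∈ nhdsWithin x (Set.Ici x) := by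
      have h1 : Set.Ici x ∩ Set.Iio L ∈ nhdsWithin x (Set.Ici x) :=
        inter_mem_nhdsWithin _ (Iio_mem_nhds hx.2)
      exact Filter.mem_of_superset h1
        (fun y hy => ⟨le_trans hx.1 hy.1, le_of_lt hy.2⟩)
    exact (frY_hasDeriv hv he hw (Set.Ico_subset_Icc_self hx)).mono_of_mem_nhdsWithin hmem
  -- initial value
  have h0 : frY v e w 0 = 0 := by
    funext i
    fin_cases i
    · show dot3 (v 0) (v 0) - 1 = 0
      simp only [hv0, he0, hw0]
      norm_num [dot3, Matrix.cons_val_two, Matrix.tail_cons, Matrix.head_cons]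
    · show dot3 (e 0) (e 0) - 1 = 0
      simp only [hv0, he0, hw0]
      norm_num [dot3, Matrix.cons_val_two, Matrix.tail_cons, Matrix.head_cons]
    · show dot3 (w 0) (w 0) - 1 = 0
      simp only [hv0, he0, hw0]
      norm_num [dot3, Matrix.cons_val_two, Matrix.tail_cons, Matrix.head_cons]
    · show dot3 (v 0) (e 0) = 0
      simp only [hv0, he0, hw0]
      norm_num [dot3, Matrix.cons_val_two, Matrix.tail_cons, Matrix.head_cons]
    · show dot3 (v 0) (w 0) = 0
      simp only [hv0, he0, hw0]
      norm_num [dot3, Matrix.cons_val_two, Matrix.tail_cons, Matrix.head_cons]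
    · show dot3 (e 0) (w 0) = 0
      simp only [hv0, he0, hw0]
      norm_num [dot3, Matrix.cons_val_two, Matrix.tail_cons, Matrix.head_cons]
    · show v 0 1 * e 0 2 - v 0 2 * e 0 1 + w 0 0 = 0
      simp only [hv0, he0, hw0]
      norm_num [dot3, Matrix.cons_val_two, Matrix.tail_cons, Matrix.head_cons]
    · show v 0 2 * e 0 0 - v 0 0 * e 0 2 + w 0 1 = 0
      simp only [hv0, he0, hw0]
      norm_num [dot3, Matrix.cons_val_two, Matrix.tail_cons, Matrix.head_cons]
    · show v 0 0 * e 0 1 - v 0 1 * e 0 0 + w 0 2 = 0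
      simp only [hv0, he0, hw0]
      norm_num [dot3, Matrix.cons_val_two, Matrix.tail_cons, Matrix.head_cons]
    · show v 0 1 * w 0 2 - v 0 2 * w 0 1 - e 0 0 = 0
      simp only [hv0, he0, hw0]
      norm_num [dot3]
    · show v 0 2 * w 0 0 - v 0 0 * w 0 2 - e 0 1 = 0
      simp only [hv0, he0, hw0]
      norm_num [dot3, Matrix.cons_val_two, Matrix.tail_cons, Matrix.head_cons]
    · show v 0 0 * w 0 1 - v 0 1 * w 0 0 - e 0 2 = 0
      simp only [hv0, he0, hw0]
      norm_num [dot3, Matrix.cons_val_two, Matrix.tail_cons, Matrix.head_cons]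
    · show e 0 1 * w 0 2 - e 0 2 * w 0 1 + v 0 0 = 0
      simp only [hv0, he0, hw0]
      norm_num [dot3, Matrix.cons_val_two, Matrix.tail_cons, Matrix.head_cons]
    · show e 0 2 * w 0 0 - e 0 0 * w 0 2 + v 0 1 = 0
      simp only [hv0, he0, hw0]
      norm_num [dot3]
    · show e 0 0 * w 0 1 - e 0 1 * w 0 0 + v 0 2 = 0
      simp only [hv0, he0, hw0]
      norm_num [dot3, Matrix.cons_val_two, Matrix.tail_cons, Matrix.head_cons]
  -- Gronwall bound
  have hbound : ∀ x ∈ Set.Ico (0:ℝ) L,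
      ‖frY' q₁ q₂ v e w x‖ ≤ 4 * C * ‖frY v e w x‖ + 0 := by
    intro x hx
    have hx' : x ∈ Set.Icc (0:ℝ) L := Set.Ico_subset_Icc_self hx
    have hq1 := hq1C x hx'
    have hq2 := hq2C x hx'
    have hN : (0:ℝ) ≤ ‖frY v e w x‖ := norm_nonneg _
    have b0 : |dot3 (v x) (v x) - 1| ≤ ‖frY v e w x‖ := norm_le_pi_norm (frY v e w x) 0
    have b1 : |dot3 (e x) (e x) - 1| ≤ ‖frY v e w x‖ := norm_le_pi_norm (frY v e w x) 1
    have b2 : |dot3 (w x) (w x) - 1| ≤ ‖frY v e w x‖ := norm_le_pi_norm (frY v e w x) 2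
    have b3 : |dot3 (v x) (e x)| ≤ ‖frY v e w x‖ := norm_le_pi_norm (frY v e w x) 3
    have b4 : |dot3 (v x) (w x)| ≤ ‖frY v e w x‖ := norm_le_pi_norm (frY v e w x) 4
    have b5 : |dot3 (e x) (w x)| ≤ ‖frY v e w x‖ := norm_le_pi_norm (frY v e w x) 5
    have b6 : |v x 1 * e x 2 - v x 2 * e x 1 + w x 0| ≤ ‖frY v e w x‖ := norm_le_pi_norm (frY v e w x) 6
    have b7 : |v x 2 * e x 0 - v x 0 * e x 2 + w x 1| ≤ ‖frY v e w x‖ := norm_le_pi_norm (frY v e w x) 7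
    have b8 : |v x 0 * e x 1 - v x 1 * e x 0 + w x 2| ≤ ‖frY v e w x‖ := norm_le_pi_norm (frY v e w x) 8
    have b9 : |v x 1 * w x 2 - v x 2 * w x 1 - e x 0| ≤ ‖frY v e w x‖ := norm_le_pi_norm (frY v e w x) 9
    have b10 : |v x 2 * w x 0 - v x 0 * w x 2 - e x 1| ≤ ‖frY v e w x‖ := norm_le_pi_norm (frY v e w x) 10
    have b11 : |v x 0 * w x 1 - v x 1 * w x 0 - e x 2| ≤ ‖frY v e w x‖ := norm_le_pi_norm (frY v e w x) 11
    have b12 : |e x 1 * w x 2 - e x 2 * w x 1 + v x 0| ≤ ‖frY v e w x‖ := norm_le_pi_norm (frY v e w x) 12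
    have b13 : |e x 2 * w x 0 - e x 0 * w x 2 + v x 1| ≤ ‖frY v e w x‖ := norm_le_pi_norm (frY v e w x) 13
    have b14 : |e x 0 * w x 1 - e x 1 * w x 0 + v x 2| ≤ ‖frY v e w x‖ := norm_le_pi_norm (frY v e w x) 14
    obtain ⟨b0l, b0r⟩ := abs_le.1 b0
    obtain ⟨b1l, b1r⟩ := abs_le.1 b1
    obtain ⟨b2l, b2r⟩ := abs_le.1 b2
    obtain ⟨b3l, b3r⟩ := abs_le.1 b3
    obtain ⟨b4l, b4r⟩ := abs_le.1 b4
    obtain ⟨b5l, b5r⟩ := abs_le.1 b5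
    obtain ⟨b6l, b6r⟩ := abs_le.1 b6
    obtain ⟨b7l, b7r⟩ := abs_le.1 b7
    obtain ⟨b8l, b8r⟩ := abs_le.1 b8
    obtain ⟨b9l, b9r⟩ := abs_le.1 b9
    obtain ⟨b10l, b10r⟩ := abs_le.1 b10
    obtain ⟨b11l, b11r⟩ := abs_le.1 b11
    obtain ⟨b12l, b12r⟩ := abs_le.1 b12
    obtain ⟨b13l, b13r⟩ := abs_le.1 b13
    obtain ⟨b14l, b14r⟩ := abs_le.1 b14
    rw [add_zero]
    rw [pi_norm_le_iff_of_nonneg (by positivity)]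
    intro i
    fin_cases i
    · show |q₁ x * (2 * (dot3 (v x) (e x))) + q₂ x * (2 * (dot3 (v x) (w x)))| ≤ 4 * C * ‖frY v e w x‖
      exact abs_lin_bound hq1 hq2 (by rw [abs_le]; constructor <;> linarith)
        (by rw [abs_le]; constructor <;> linarith)
    · show |q₁ x * (-(2 * (dot3 (v x) (e x)))) + q₂ x * ((0:ℝ))| ≤ 4 * C * ‖frY v e w x‖
      exact abs_lin_bound hq1 hq2 (by rw [abs_le]; constructor <;> linarith)
        (by rw [abs_le]; constructor <;> linarith)
    · show |q₁ x * ((0:ℝ)) + q₂ x * (-(2 * (dot3 (v x) (w x))))| ≤ 4 * C * ‖frY v e w x‖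
      exact abs_lin_bound hq1 hq2 (by rw [abs_le]; constructor <;> linarith)
        (by rw [abs_le]; constructor <;> linarith)
    · show |q₁ x * (dot3 (e x) (e x) - dot3 (v x) (v x)) + q₂ x * (dot3 (e x) (w x))| ≤ 4 * C * ‖frY v e w x‖
      exact abs_lin_bound hq1 hq2 (by rw [abs_le]; constructor <;> linarith)
        (by rw [abs_le]; constructor <;> linarith)
    · show |q₁ x * (dot3 (e x) (w x)) + q₂ x * (dot3 (w x) (w x) - dot3 (v x) (v x))| ≤ 4 * C * ‖frY v e w x‖
      exact abs_lin_bound hq1 hq2 (by rw [abs_le]; constructor <;> linarith)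
        (by rw [abs_le]; constructor <;> linarith)
    · show |q₁ x * (-(dot3 (v x) (w x))) + q₂ x * (-(dot3 (v x) (e x)))| ≤ 4 * C * ‖frY v e w x‖
      exact abs_lin_bound hq1 hq2 (by rw [abs_le]; constructor <;> linarith)
        (by rw [abs_le]; constructor <;> linarith)
    · show |q₁ x * ((0:ℝ)) + q₂ x * (-(e x 1 * w x 2 - e x 2 * w x 1 + v x 0))| ≤ 4 * C * ‖frY v e w x‖
      exact abs_lin_bound hq1 hq2 (by rw [abs_le]; constructor <;> linarith)
        (by rw [abs_le]; constructor <;> linarith)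
    · show |q₁ x * ((0:ℝ)) + q₂ x * (-(e x 2 * w x 0 - e x 0 * w x 2 + v x 1))| ≤ 4 * C * ‖frY v e w x‖
      exact abs_lin_bound hq1 hq2 (by rw [abs_le]; constructor <;> linarith)
        (by rw [abs_le]; constructor <;> linarith)
    · show |q₁ x * ((0:ℝ)) + q₂ x * (-(e x 0 * w x 1 - e x 1 * w x 0 + v x 2))| ≤ 4 * C * ‖frY v e w x‖
      exact abs_lin_bound hq1 hq2 (by rw [abs_le]; constructor <;> linarith)
        (by rw [abs_le]; constructor <;> linarith)
    · show |q₁ x * ((e x 1 * w x 2 - e x 2 * w x 1 + v x 0)) + q₂ x * ((0:ℝ))| ≤ 4 * C * ‖frY v e w x‖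
      exact abs_lin_bound hq1 hq2 (by rw [abs_le]; constructor <;> linarith)
        (by rw [abs_le]; constructor <;> linarith)
    · show |q₁ x * ((e x 2 * w x 0 - e x 0 * w x 2 + v x 1)) + q₂ x * ((0:ℝ))| ≤ 4 * C * ‖frY v e w x‖
      exact abs_lin_bound hq1 hq2 (by rw [abs_le]; constructor <;> linarith)
        (by rw [abs_le]; constructor <;> linarith)
    · show |q₁ x * ((e x 0 * w x 1 - e x 1 * w x 0 + v x 2)) + q₂ x * ((0:ℝ))| ≤ 4 * C * ‖frY v e w x‖
      exact abs_lin_bound hq1 hq2 (by rw [abs_le]; constructor <;> linarith)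
        (by rw [abs_le]; constructor <;> linarith)
    · show |q₁ x * (-(v x 1 * w x 2 - v x 2 * w x 1 - e x 0)) + q₂ x * ((v x 1 * e x 2 - v x 2 * e x 1 + w x 0))| ≤ 4 * C * ‖frY v e w x‖
      exact abs_lin_bound hq1 hq2 (by rw [abs_le]; constructor <;> linarith)
        (by rw [abs_le]; constructor <;> linarith)
    · show |q₁ x * (-(v x 2 * w x 0 - v x 0 * w x 2 - e x 1)) + q₂ x * ((v x 2 * e x 0 - v x 0 * e x 2 + w x 1))| ≤ 4 * C * ‖frY v e w x‖
      exact abs_lin_bound hq1 hq2 (by rw [abs_le]; constructor <;> linarith)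
        (by rw [abs_le]; constructor <;> linarith)
    · show |q₁ x * (-(v x 0 * w x 1 - v x 1 * w x 0 - e x 2)) + q₂ x * ((v x 0 * e x 1 - v x 1 * e x 0 + w x 2))| ≤ 4 * C * ‖frY v e w x‖
      exact abs_lin_bound hq1 hq2 (by rw [abs_le]; constructor <;> linarith)
        (by rw [abs_le]; constructor <;> linarith)
  -- apply Gronwall
  have hinit : ‖frY v e w 0‖ ≤ 0 := by rw [h0]; simp
  have key := norm_le_gronwallBound_of_norm_deriv_right_le (δ := 0) (K := 4*C) (ε := 0)
    hcont hder hinit hbound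
  have hzero : ∀ s ∈ Set.Icc (0:ℝ) L, frY v e w s = 0 := by
    intro s hs
    have h := key s hs
    rw [gronwallBound_ε0_δ0] at h
    exact norm_le_zero_iff.1 h
  intro s hs
  have hz := hzero s hs
  have c0 : (v s 0 * v s 0 + v s 1 * v s 1 + v s 2 * v s 2) - 1 = 0 := congrFun hz 0
  have c1 : (e s 0 * e s 0 + e s 1 * e s 1 + e s 2 * e s 2) - 1 = 0 := congrFun hz 1
  have c2 : (w s 0 * w s 0 + w s 1 * w s 1 + w s 2 * w s 2) - 1 = 0 := congrFun hz 2
  have c3 : (v s 0 * e s 0 + v s 1 * e s 1 + v s 2 * e s 2) = 0 := congrFun hz 3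
  have c4 : (v s 0 * w s 0 + v s 1 * w s 1 + v s 2 * w s 2) = 0 := congrFun hz 4
  have c5 : (e s 0 * w s 0 + e s 1 * w s 1 + e s 2 * w s 2) = 0 := congrFun hz 5
  have c6 : v s 1 * e s 2 - v s 2 * e s 1 + w s 0 = 0 := congrFun hz 6
  have c7 : v s 2 * e s 0 - v s 0 * e s 2 + w s 1 = 0 := congrFun hz 7
  have c8 : v s 0 * e s 1 - v s 1 * e s 0 + w s 2 = 0 := congrFun hz 8
  have c9 : v s 1 * w s 2 - v s 2 * w s 1 - e s 0 = 0 := congrFun hz 9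
  have c10 : v s 2 * w s 0 - v s 0 * w s 2 - e s 1 = 0 := congrFun hz 10
  have c11 : v s 0 * w s 1 - v s 1 * w s 0 - e s 2 = 0 := congrFun hz 11
  have c12 : e s 1 * w s 2 - e s 2 * w s 1 + v s 0 = 0 := congrFun hz 12
  have c13 : e s 2 * w s 0 - e s 0 * w s 2 + v s 1 = 0 := congrFun hz 13
  have c14 : e s 0 * w s 1 - e s 1 * w s 0 + v s 2 = 0 := congrFun hz 14
  -- orthonormality facts
  have dvv : dot3 (v s) (v s) = 1 := by simp only [dot3]; linarith
  have dee : dot3 (e s) (e s) = 1 := by simp only [dot3]; linarith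
  have dww : dot3 (w s) (w s) = 1 := by simp only [dot3]; linarith
  have dve : dot3 (v s) (e s) = 0 := by simp only [dot3]; linarith
  have dvw : dot3 (v s) (w s) = 0 := by simp only [dot3]; linarith
  have dew : dot3 (e s) (w s) = 0 := by simp only [dot3]; linarith
  refine ⟨⟨dvv, dee, dww, dve, dvw, dew⟩, ?_, ?_, ?_⟩
  · -- span
    have hM : (Matrix.of ![v s, e s, w s]) * Matrix.transpose (Matrix.of ![v s, e s, w s]) = 1 := by
      ext i j
      fin_cases i <;> fin_cases j <;>
        simp [-Matrix.cons_transpose, Matrix.mul_apply, Fin.sum_univ_three, Matrix.one_apply, Matrix.transpose_apply, Matrix.of_apply, Matrix.cons_val_zero, Matrix.cons_val_one, Matrix.cons_val_two, Matrix.head_cons, Matrix.tail_cons] <;>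
        first
          | linear_combination c0 | linear_combination c1 | linear_combination c2
          | linear_combination c3 | linear_combination c4 | linear_combination c5
    have hM2 := mul_eq_one_comm.mp hM
    have key2 : ∀ i j : Fin 3,
        v s i * v s j + e s i * e s j + w s i * w s j = if i = j then 1 else 0 := by
      intro i j
      have h := Matrix.ext_iff.2 hM2 i j
      simpa [-Matrix.cons_transpose, Matrix.mul_apply, Fin.sum_univ_three, Matrix.one_apply, Matrix.transpose_apply, Matrix.of_apply, Matrix.cons_val_zero, Matrix.cons_val_one, Matrix.cons_val_two, Matrix.head_cons, Matrix.tail_cons] using h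
    rw [eq_top_iff]
    rintro x -
    have t00 : v s 0 * v s 0 + e s 0 * e s 0 + w s 0 * w s 0 = 1 := by simpa using key2 0 0
    have t01 : v s 0 * v s 1 + e s 0 * e s 1 + w s 0 * w s 1 = 0 := by simpa using key2 0 1
    have t02 : v s 0 * v s 2 + e s 0 * e s 2 + w s 0 * w s 2 = 0 := by simpa using key2 0 2
    have t10 : v s 1 * v s 0 + e s 1 * e s 0 + w s 1 * w s 0 = 0 := by simpa using key2 1 0
    have t11 : v s 1 * v s 1 + e s 1 * e s 1 + w s 1 * w s 1 = 1 := by simpa using key2 1 1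
    have t12 : v s 1 * v s 2 + e s 1 * e s 2 + w s 1 * w s 2 = 0 := by simpa using key2 1 2
    have t20 : v s 2 * v s 0 + e s 2 * e s 0 + w s 2 * w s 0 = 0 := by simpa using key2 2 0
    have t21 : v s 2 * v s 1 + e s 2 * e s 1 + w s 2 * w s 1 = 0 := by simpa using key2 2 1
    have t22 : v s 2 * v s 2 + e s 2 * e s 2 + w s 2 * w s 2 = 1 := by simpa using key2 2 2
    have hxr : x = dot3 x (v s) • v s + dot3 x (e s) • e s + dot3 x (w s) • w s := by
      funext i
      fin_cases i
      · show x 0 = dot3 x (v s) * v s 0 + dot3 x (e s) * e s 0 + dot3 x (w s) * w s 0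
        simp only [dot3]
        first
          | linear_combination (x 0) * t00 + (x 1) * t10 + (x 2) * t20
          | linear_combination (-(x 0)) * t00 - (x 1) * t10 - (x 2) * t20
      · show x 1 = dot3 x (v s) * v s 1 + dot3 x (e s) * e s 1 + dot3 x (w s) * w s 1
        simp only [dot3]
        first
          | linear_combination (x 0) * t01 + (x 1) * t11 + (x 2) * t21
          | linear_combination (-(x 0)) * t01 - (x 1) * t11 - (x 2) * t21
      · show x 2 = dot3 x (v s) * v s 2 + dot3 x (e s) * e s 2 + dot3 x (w s) * w s 2
        simp only [dot3]
        first
          | linear_combination (x 0) * t02 + (x 1) * t12 + (x 2) * t22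
          | linear_combination (-(x 0)) * t02 - (x 1) * t12 - (x 2) * t22
    rw [hxr]
    have m1 : v s ∈ ({v s, e s, w s} : Set (Fin 3 → ℝ)) := by simp
    have m2 : e s ∈ ({v s, e s, w s} : Set (Fin 3 → ℝ)) := by simp
    have m3 : w s ∈ ({v s, e s, w s} : Set (Fin 3 → ℝ)) := by simp
    exact Submodule.add_mem _
      (Submodule.add_mem _
        (Submodule.smul_mem _ _ (Submodule.subset_span m1))
        (Submodule.smul_mem _ _ (Submodule.subset_span m2)))
      (Submodule.smul_mem _ _ (Submodule.subset_span m3))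
  · funext i
    fin_cases i
    · show v s 1 * e s 2 - v s 2 * e s 1 = -(w s 0); linarith
    · show v s 2 * e s 0 - v s 0 * e s 2 = -(w s 1); linarith
    · show v s 0 * e s 1 - v s 1 * e s 0 = -(w s 2); linarith
  · funext i
    fin_cases i
    · show v s 1 * w s 2 - v s 2 * w s 1 = e s 0; linarith
    · show v s 2 * w s 0 - v s 0 * w s 2 = e s 1; linarith
    · show v s 0 * w s 1 - v s 1 * w s 0 = e s 2; linarith
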